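/- Let M be a commutative monoid. The set Max(M) ∩ S(M) of maximal ideals of M (each maximal ideal is strongly irreducible, so this set is the set of all maximal ideals) is dense in the terminal space S(M) if and only if the m-radical of M equals the s-radical of M, i.e., ⋂{Q : Q a maximal ideal of M} = ⋂{J : J a strongly irreducible ideal of M}. -/
import Mathlib


/-- An ideal of a commutative monoid `M`: a subset closed under
multiplication by arbitrary elements of `M`. -/
def IsIdealM {M : Type*} [CommMonoid M] (I : Set M) : Prop :=
  ∀ x ∈ I, ∀ m : M, x * m ∈ I

/-- A strongly irreducible ideal: a proper ideal `I` such that for all ideals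
`J`, `K`, if `J ∩ K ⊆ I` then `J ⊆ I` or `K ⊆ I`. -/
def IsStronglyIrr {M : Type*} [CommMonoid M] (I : Set M) : Prop :=
  IsIdealM I ∧ I ≠ Set.univ ∧
    ∀ J K : Set M, IsIdealM J → IsIdealM K → J ∩ K ⊆ I → J ⊆ I ∨ K ⊆ I

/-- A prime ideal of a commutative monoid. -/
def IsPrimeIdealM {M : Type*} [CommMonoid M] (P : Set M) : Prop :=
  IsIdealM P ∧ P ≠ Set.univ ∧ ∀ x y : M, x * y ∈ P → x ∈ P ∨ y ∈ P

/-- A maximal ideal of a commutative monoid: a proper ideal maximal among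
proper ideals. -/
def IsMaximalIdealM {M : Type*} [CommMonoid M] (I : Set M) : Prop :=
  IsIdealM I ∧ I ≠ Set.univ ∧
    ∀ J : Set M, IsIdealM J → J ≠ Set.univ → I ⊆ J → J = I

/-- `SIr M` is the set (type) of strongly irreducible ideals of `M`. -/
structure SIr (M : Type*) [CommMonoid M] where
  carrier : Set M
  strongly_irr : IsStronglyIrr carrier

namespace SIr

variable {M : Type*} [CommMonoid M]

@[ext] theorem ext {I J : SIr M} (h : I.carrier = J.carrier) : I = J := by
  cases I; cases J; simpa using h

/-- `KK X = ⋂_{I ∈ X} I`, the kernel of a set of strongly irreducible ideals. -/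
def KK (X : Set (SIr M)) : Set M := ⋂ I ∈ X, I.carrier

/-- The hull-kernel operator `HK`: for nonempty `X`,
`HK X = {J ∈ S(M) : K(X) ⊆ J}`, and `HK ∅ = ∅`. -/
def HK (X : Set (SIr M)) : Set (SIr M) :=
  {J : SIr M | X.Nonempty ∧ KK X ⊆ J.carrier}

theorem HK_empty : HK (∅ : Set (SIr M)) = ∅ := by
  ext J
  simp [HK, Set.not_nonempty_empty]

theorem mem_HK_of_nonempty {X : Set (SIr M)} (hX : X.Nonempty) {J : SIr M} :
    J ∈ HK X ↔ KK X ⊆ J.carrier :=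
  ⟨fun h => h.2, fun h => ⟨hX, h⟩⟩

theorem KK_antitone {X X' : Set (SIr M)} (h : X ⊆ X') : KK X' ⊆ KK X := by
  intro m hm
  simp only [KK, Set.mem_iInter] at hm ⊢
  exact fun I hI => hm I (h hI)

theorem KK_isIdeal (X : Set (SIr M)) : IsIdealM (KK X) := by
  intro x hx m
  simp only [KK, Set.mem_iInter] at hx ⊢
  exact fun I hI => I.strongly_irr.1 x (hx I hI) m

theorem subset_HK (X : Set (SIr M)) : X ⊆ HK X := by
  intro J hJ
  refine ⟨⟨J, hJ⟩, fun m hm => ?_⟩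
  simp only [KK, Set.mem_iInter] at hm
  exact hm J hJ

theorem HK_mono {X X' : Set (SIr M)} (h : X ⊆ X') : HK X ⊆ HK X' := by
  rintro J ⟨hne, hsub⟩
  exact ⟨hne.mono h, (KK_antitone h).trans hsub⟩

theorem HK_idem (X : Set (SIr M)) : HK (HK X) = HK X := by
  refine Set.Subset.antisymm ?_ (subset_HK _)
  rintro J ⟨hne, hsub⟩
  obtain ⟨I, hI⟩ := hne
  refine ⟨hI.1, Set.Subset.trans ?_ hsub⟩
  intro m hm
  simp only [KK, Set.mem_iInter]
  exact fun L hL => hL.2 hm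

theorem HK_union (X X' : Set (SIr M)) : HK (X ∪ X') = HK X ∪ HK X' := by
  rcases X.eq_empty_or_nonempty with rfl | hX
  · rw [Set.empty_union, HK_empty, Set.empty_union]
  rcases X'.eq_empty_or_nonempty with rfl | hX'
  · rw [Set.union_empty, HK_empty, Set.union_empty]
  refine Set.Subset.antisymm ?_
    (Set.union_subset (HK_mono Set.subset_union_left)
      (HK_mono Set.subset_union_right))
  rintro J ⟨-, hsub⟩
  have hKK : KK X ∩ KK X' ⊆ J.carrier := by
    refine Set.Subset.trans ?_ hsub
    intro m hm
    simp only [KK, Set.mem_iInter, Set.mem_inter_iff] at hm ⊢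
    rintro I (hI | hI)
    · exact hm.1 I hI
    · exact hm.2 I hI
  rcases J.strongly_irr.2.2 (KK X) (KK X') (KK_isIdeal X) (KK_isIdeal X') hKK with h | h
  · exact Or.inl ⟨hX, h⟩
  · exact Or.inr ⟨hX', h⟩

/-- The terminal-space (Zariski) topology on `SIr M`: the closed sets are
exactly the sets of the form `HK X`. -/
instance instTopologicalSpace : TopologicalSpace (SIr M) :=
  TopologicalSpace.ofClosed (Set.range HK)
    ⟨∅, HK_empty⟩
    (fun A hA => by
      refine ⟨⋂₀ A, Set.Subset.antisymm (Set.subset_sInter fun C hC => ?_) (subset_HK _)⟩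
      obtain ⟨Y, hY⟩ := hA hC
      calc HK (⋂₀ A) ⊆ HK C := HK_mono (Set.sInter_subset_of_mem hC)
        _ = HK (HK Y) := by rw [hY]
        _ = HK Y := HK_idem Y
        _ = C := hY)
    (fun A hA B hB => by
      obtain ⟨Y, hY⟩ := hA
      obtain ⟨Z, hZ⟩ := hB
      exact ⟨Y ∪ Z, by rw [HK_union, hY, hZ]⟩)

theorem isClosed_iff {C : Set (SIr M)} : IsClosed C ↔ ∃ X, HK X = C := by
  rw [← isOpen_compl_iff]
  show Cᶜᶜ ∈ Set.range HK ↔ _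
  rw [compl_compl]
  exact Iff.rfl

end SIr

theorem maximal_stronglyIrr {M : Type*} [CommMonoid M] {I : Set M}
    (h : IsMaximalIdealM I) : IsStronglyIrr I := by
  obtain ⟨hid, hne, hmax⟩ := h
  refine ⟨hid, hne, fun J K hJ hK hJK => ?_⟩
  by_contra hc
  push_neg at hc
  obtain ⟨hJI, hKI⟩ := hc
  have hJU : J ∪ I = Set.univ := by
    by_contra hne'
    have hid' : IsIdealM (J ∪ I) := fun x hx m =>
      hx.elim (fun h => Or.inl (hJ x h m)) (fun h => Or.inr (hid x h m))
    have := hmax _ hid' hne' Set.subset_union_right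
    exact hJI (fun x hx => this ▸ (Or.inl hx : x ∈ J ∪ I))
  have hKU : K ∪ I = Set.univ := by
    by_contra hne'
    have hid' : IsIdealM (K ∪ I) := fun x hx m =>
      hx.elim (fun h => Or.inl (hK x h m)) (fun h => Or.inr (hid x h m))
    have := hmax _ hid' hne' Set.subset_union_right
    exact hKI (fun x hx => this ▸ (Or.inl hx : x ∈ K ∪ I))
  apply hne
  apply Set.eq_univ_of_forall
  intro m
  have hmJ : m ∈ J ∪ I := hJU ▸ Set.mem_univ m
  have hmK : m ∈ K ∪ I := hKU ▸ Set.mem_univ m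
  rcases hmJ with hJm | hIm
  · rcases hmK with hKm | hIm
    · exact hJK ⟨hJm, hKm⟩
    · exact hIm
  · exact hIm

theorem SIr.closure_eq_HK {M : Type*} [CommMonoid M] (X : Set (SIr M)) :
    closure X = SIr.HK X := by
  apply Set.Subset.antisymm
  · exact closure_minimal (SIr.subset_HK X) (SIr.isClosed_iff.2 ⟨X, rfl⟩)
  · obtain ⟨Y, hY⟩ := SIr.isClosed_iff.1 (isClosed_closure (s := X))
    calc SIr.HK X ⊆ SIr.HK (closure X) := SIr.HK_mono subset_closure
      _ = SIr.HK (SIr.HK Y) := by rw [hY]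
      _ = SIr.HK Y := SIr.HK_idem Y
      _ = closure X := hY

/-- the set of maximal ideals is dense in the terminal space iff
the m-radical equals the s-radical. -/
theorem dense_maximals_iff (M : Type*) [CommMonoid M] :
    Dense {J : SIr M | IsMaximalIdealM J.carrier} ↔
      ⋂₀ {Q : Set M | IsMaximalIdealM Q} = ⋂₀ {J : Set M | IsStronglyIrr J} := by
  set Mx : Set (SIr M) := {J : SIr M | IsMaximalIdealM J.carrier} with hMx
  rw [dense_iff_closure_eq, SIr.closure_eq_HK]
  have hKKmax : SIr.KK Mx = ⋂₀ {Q : Set M | IsMaximalIdealM Q} := by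
    ext m
    simp only [SIr.KK, Set.mem_iInter, Set.mem_sInter, Set.mem_setOf_eq, hMx]
    constructor
    · intro h Q hQ; exact h ⟨Q, maximal_stronglyIrr hQ⟩ hQ
    · intro h I hI; exact h _ hI
  have hKKuniv : SIr.KK (Set.univ : Set (SIr M)) = ⋂₀ {J : Set M | IsStronglyIrr J} := by
    ext m
    simp only [SIr.KK, Set.mem_iInter, Set.mem_sInter, Set.mem_setOf_eq]
    constructor
    · intro h J hJ; exact h ⟨J, hJ⟩ (Set.mem_univ _)
    · intro h I _; exact h _ I.strongly_irr
  constructor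
  · intro hHK
    rcases Set.eq_empty_or_nonempty Mx with hemp | hne
    · rw [hemp, SIr.HK_empty] at hHK
      have hSIr : ∀ J : Set M, ¬ IsStronglyIrr J := by
        intro J hJ
        exact absurd (hHK ▸ Set.mem_univ (⟨J, hJ⟩ : SIr M)) (Set.notMem_empty _)
      have h1 : {Q : Set M | IsMaximalIdealM Q} = ∅ := by
        ext Q; simp only [Set.mem_setOf_eq, Set.mem_empty_iff_false, iff_false]
        exact fun hQ => hSIr Q (maximal_stronglyIrr hQ)
      have h2 : {J : Set M | IsStronglyIrr J} = ∅ := by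
        ext J; simp only [Set.mem_setOf_eq, Set.mem_empty_iff_false, iff_false]
        exact hSIr J
      rw [h1, h2]
    · apply Set.Subset.antisymm
      · rw [← hKKmax, ← hKKuniv]
        intro m hm
        simp only [SIr.KK, Set.mem_iInter]
        intro I _
        have hI : I ∈ SIr.HK Mx := hHK ▸ Set.mem_univ I
        exact hI.2 hm
      · rw [← hKKmax, ← hKKuniv]
        exact SIr.KK_antitone (Set.subset_univ _)
  · intro heq
    apply Set.eq_univ_of_forall
    intro J
    have hne : Mx.Nonempty := by
      by_contra hemp
      rw [Set.not_nonempty_iff_eq_empty] at hemp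
      have hMmax : {Q : Set M | IsMaximalIdealM Q} = ∅ := by
        ext Q; simp only [Set.mem_setOf_eq, Set.mem_empty_iff_false, iff_false]
        intro hQ
        have hmem : (⟨Q, maximal_stronglyIrr hQ⟩ : SIr M) ∈ Mx := hQ
        rw [hemp] at hmem
        exact hmem
      rw [hMmax, Set.sInter_empty] at heq
      have : J.carrier = Set.univ := by
        apply Set.eq_univ_of_forall
        intro m
        have : m ∈ ⋂₀ {J : Set M | IsStronglyIrr J} := heq ▸ Set.mem_univ m
        exact this J.carrier J.strongly_irr
      exact J.strongly_irr.2.1 this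
    refine ⟨hne, ?_⟩
    rw [hKKmax, heq, ← hKKuniv]
    intro m hm
    simp only [SIr.KK, Set.mem_iInter] at hm
    exact hm J (Set.mem_univ J)
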